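/- arXiv:1708.05690 — 6 statements merged into one kernel-verified Lean document; each statement's English description precedes it below -/
import Mathlib

section
/- Let G be a finite simple graph on vertex set N with at least one vertex, and define c : N × N → ℝ by c(i,i) = 1, c(i,j) = 0.9 if i and j are adjacent in G, and c(i,j) = 0.6 if i ≠ j are not adjacent. Then for every k, G has a dominating set D with |D| = k if and only if there exists a set M ⊆ N with |M| = k such that ρ(M) ≥ 0.9. -/
/-- Let `G` be a finite simple graph on a nonempty vertex set `N`
and let `c(i,i) = 1`, `c(i,j) = 0.9` if `i ~ j`, and `c(i,j) = 0.6` if `i ≠ j`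
are non-adjacent.  Then for every `k`, `G` has a dominating set `D` with
`|D| = k` iff there exists a (nonempty, since ρ is defined only for nonempty
sets) `M ⊆ N` with `|M| = k` and `ρ(M) ≥ 0.9`, where
`ρ(M) = min_{i∈N} max_{j∈M} c(j,i)`. -/
theorem dominating_set_iff_rho {N : Type*} [Fintype N] [DecidableEq N] [Nonempty N]
    (G : SimpleGraph N) (c : N → N → ℝ)
    (hc1 : ∀ i, c i i = 1)
    (hc2 : ∀ i j, G.Adj i j → c i j = 0.9)
    (hc3 : ∀ i j, i ≠ j → ¬ G.Adj i j → c i j = 0.6)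
    (k : ℕ) :
    (∃ D : Finset N, D.card = k ∧ ∀ v ∉ D, ∃ u ∈ D, G.Adj u v) ↔
    (∃ M : Finset N, ∃ hM : M.Nonempty, M.card = k ∧
      0.9 ≤ Finset.univ.inf' Finset.univ_nonempty
              (fun i => M.sup' hM (fun j => c j i))) := by
  constructor
  · rintro ⟨D, hcard, hdom⟩
    have hD : D.Nonempty := by
      by_contra h
      rw [Finset.not_nonempty_iff_eq_empty] at h
      obtain ⟨v⟩ := ‹Nonempty N›
      obtain ⟨u, hu, _⟩ := hdom v (by simp [h])
      simp [h] at hu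
    refine ⟨D, hD, hcard, ?_⟩
    rw [Finset.le_inf'_iff]
    intro i _
    by_cases hi : i ∈ D
    · refine le_trans ?_ (Finset.le_sup' (fun j => c j i) hi)
      rw [hc1 i]; norm_num
    · obtain ⟨u, hu, hadj⟩ := hdom i hi
      refine le_trans ?_ (Finset.le_sup' (fun j => c j i) hu)
      rw [hc2 u i hadj]
  · rintro ⟨M, hM, hcard, hρ⟩
    refine ⟨M, hcard, fun v hv => ?_⟩
    rw [Finset.le_inf'_iff] at hρ
    have h := hρ v (Finset.mem_univ v)
    obtain ⟨j, hj, hjv⟩ := Finset.exists_mem_eq_sup' hM (fun j => c j v)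
    rw [hjv] at h
    refine ⟨j, hj, ?_⟩
    by_contra hadj
    have hne : j ≠ v := fun he => hv (he ▸ hj)
    rw [hc3 j v hne hadj] at h
    norm_num at h
end

section
/- Let G be a finite simple graph on vertex set N with n vertices (n ≥ 1), and define c : N × N → ℝ by c(i,i) = 1, c(i,j) = 0.9 if i and j are adjacent in G, and c(i,j) = 0.6 if i ≠ j are not adjacent. Then for every k ≤ n, G has a dominating set D with |D| = k if and only if there exists a set M ⊆ N with |M| = k such that ψ(M) ≥ k + 0.9·(n − k). -/
/-- Let `G` be a finite simple graph on a nonempty vertex set `N`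
with `n` vertices and let `c(i,i) = 1`, `c(i,j) = 0.9` if `i ~ j`, and
`c(i,j) = 0.6` if `i ≠ j` are non-adjacent.  Then for every `k ≤ n`, `G` has a
dominating set `D` with `|D| = k` iff there exists a (nonempty, since ψ is
defined only for nonempty sets) `M ⊆ N` with `|M| = k` and
`ψ(M) ≥ k + 0.9·(n − k)`, where `ψ(M) = Σ_{i∈N} max_{j∈M} c(j,i)`. -/
theorem dominating_set_iff_psi {N : Type*} [Fintype N] [DecidableEq N] [Nonempty N]
    (G : SimpleGraph N) (c : N → N → ℝ)
    (hc1 : ∀ i, c i i = 1)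
    (hc2 : ∀ i j, G.Adj i j → c i j = 0.9)
    (hc3 : ∀ i j, i ≠ j → ¬ G.Adj i j → c i j = 0.6)
    (k : ℕ) (hk : k ≤ Fintype.card N) :
    (∃ D : Finset N, D.card = k ∧ ∀ v ∉ D, ∃ u ∈ D, G.Adj u v) ↔
    (∃ M : Finset N, ∃ hM : M.Nonempty, M.card = k ∧
      (k : ℝ) + 0.9 * ((Fintype.card N : ℝ) - (k : ℝ)) ≤
        ∑ i : N, M.sup' hM (fun j => c j i)) := by
  have hle1 : ∀ j i : N, c j i ≤ 1 := by
    intro j i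
    by_cases hji : j = i
    · subst hji; rw [hc1]
    · by_cases hadj : G.Adj j i
      · rw [hc2 j i hadj]; norm_num
      · rw [hc3 j i hji hadj]; norm_num
  have hle09 : ∀ j i : N, j ≠ i → c j i ≤ 0.9 := by
    intro j i hji
    by_cases hadj : G.Adj j i
    · rw [hc2 j i hadj]
    · rw [hc3 j i hji hadj]; norm_num
  constructor
  · rintro ⟨D, hDcard, hDdom⟩
    have hDne : D.Nonempty := by
      rcases Finset.eq_empty_or_nonempty D with h | h
      · exfalso
        obtain ⟨v⟩ := ‹Nonempty N›
        obtain ⟨u, hu, _⟩ := hDdom v (by simp [h])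
        simp [h] at hu
      · exact h
    refine ⟨D, hDne, hDcard, ?_⟩
    have hbound : ∀ i : N, (if i ∈ D then (1:ℝ) else 0.9) ≤ D.sup' hDne (fun j => c j i) := by
      intro i
      by_cases hi : i ∈ D
      · simp only [hi, if_true]
        have h := Finset.le_sup' (fun j => c j i) hi
        rwa [hc1 i] at h
      · simp only [hi, if_false]
        obtain ⟨u, hu, hadj⟩ := hDdom i hi
        have h := Finset.le_sup' (fun j => c j i) hu
        rwa [hc2 u i hadj] at h
    have hsum : ∑ i : N, (if i ∈ D then (1:ℝ) else 0.9)
        = (k : ℝ) + 0.9 * ((Fintype.card N : ℝ) - (k : ℝ)) := by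
      rw [← Finset.sum_add_sum_compl D]
      rw [Finset.sum_congr rfl (fun i hi => if_pos hi),
          Finset.sum_congr rfl (fun i hi => if_neg (Finset.mem_compl.mp hi))]
      rw [Finset.sum_const, Finset.sum_const, Finset.card_compl, hDcard]
      simp only [nsmul_eq_mul]
      rw [Nat.cast_sub hk]
      ring
    calc (k : ℝ) + 0.9 * ((Fintype.card N : ℝ) - (k : ℝ))
        = ∑ i : N, (if i ∈ D then (1:ℝ) else 0.9) := hsum.symm
      _ ≤ _ := Finset.sum_le_sum (fun i _ => hbound i)
  · rintro ⟨M, hMne, hMcard, hψ⟩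
    refine ⟨M, hMcard, ?_⟩
    intro v hv
    by_contra hcon
    push_neg at hcon
    have hub : ∀ i : N, M.sup' hMne (fun j => c j i)
        ≤ (if i ∈ M then (1:ℝ) else 0.9) - (if i = v then 0.3 else 0) := by
      intro i
      apply Finset.sup'_le
      intro j hj
      by_cases hiv : i = v
      · subst hiv
        have hjv : j ≠ i := fun h => hv (h ▸ hj)
        have : c j i = 0.6 := hc3 j i hjv (hcon j hj)
        simp only [Finset.mem_coe] at *
        rw [this]
        simp only [if_neg hv, if_pos rfl]
        norm_num
      · by_cases hi : i ∈ M
        · rw [if_pos hi, if_neg hiv]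
          have := hle1 j i
          linarith
        · have hji : j ≠ i := fun h => hi (h ▸ hj)
          rw [if_neg hi, if_neg hiv]
          have := hle09 j i hji
          linarith
    have hsum2 : ∑ i : N, ((if i ∈ M then (1:ℝ) else 0.9) - (if i = v then 0.3 else 0))
        = (k : ℝ) + 0.9 * ((Fintype.card N : ℝ) - (k : ℝ)) - 0.3 := by
      rw [Finset.sum_sub_distrib]
      have h1 : ∑ i : N, (if i ∈ M then (1:ℝ) else 0.9)
          = (k : ℝ) + 0.9 * ((Fintype.card N : ℝ) - (k : ℝ)) := by
        rw [← Finset.sum_add_sum_compl M]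
        rw [Finset.sum_congr rfl (fun i hi => if_pos hi),
            Finset.sum_congr rfl (fun i hi => if_neg (Finset.mem_compl.mp hi))]
        rw [Finset.sum_const, Finset.sum_const, Finset.card_compl, hMcard]
        simp only [nsmul_eq_mul]
        rw [Nat.cast_sub hk]
        ring
      have h2 : ∑ i : N, (if i = v then (0.3:ℝ) else 0) = 0.3 := by
        rw [Finset.sum_ite_eq' Finset.univ v (fun _ => (0.3:ℝ))]
        simp
      rw [h1, h2]
    have := Finset.sum_le_sum (fun i (_ : i ∈ Finset.univ) => hub i)
    rw [hsum2] at this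
    linarith
end

section
/- For the pairwise-similarity TU game ν and the allocation x_i = (1/2) · Σ_{j ∈ N, j ≠ i} c(i,j), the excess of every coalition equals the excess of its complement: for every S ⊆ N, ν(S) − Σ_{i ∈ S} x_i = ν(N \ S) − Σ_{i ∈ N \ S} x_i. -/
lemma offDiag_sum_eq {N : Type*} [DecidableEq N] (S : Finset N) (c : N → N → ℝ) :
    (∑ p ∈ S.offDiag, c p.1 p.2) = ∑ i ∈ S, ∑ j ∈ S.erase i, c i j := by
  rw [show S.offDiag = (S ×ˢ S).filter (fun a => a.1 ≠ a.2) from by ext; simp [Finset.mem_offDiag, and_assoc], Finset.sum_filter, Finset.sum_product]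
  refine Finset.sum_congr rfl fun i hi => ?_
  rw [← Finset.sum_filter]
  apply Finset.sum_congr _ fun _ _ => rfl
  ext j
  simp [Finset.mem_erase, eq_comm, and_comm]

/-- For the pairwise-similarity TU game
`ν(S) = Σ_{{i,j} ⊆ S, i ≠ j} c(i,j)` (with `c` symmetric) and the allocation
`x_i = (1/2) · Σ_{j ≠ i} c(i,j)`, the excess of every coalition equals the
excess of its complement:
`ν(S) − Σ_{i∈S} x_i = ν(N \ S) − Σ_{i∈N\S} x_i` for every `S ⊆ N`. -/
theorem excess_eq_complement_excess {N : Type*} [Fintype N] [DecidableEq N]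
    [Nonempty N]
    (c : N → N → ℝ) (hsym : ∀ i j, c i j = c j i)
    (ν : Finset N → ℝ)
    (hν : ∀ S : Finset N, ν S = (∑ p ∈ S.offDiag, c p.1 p.2) / 2)
    (x : N → ℝ)
    (hx : ∀ i, x i = (1 / 2) * ∑ j ∈ Finset.univ.erase i, c i j)
    (S : Finset N) :
    ν S - ∑ i ∈ S, x i = ν (Finset.univ \ S) - ∑ i ∈ Finset.univ \ S, x i := by
  have key : ∀ T : Finset N, ν T - ∑ i ∈ T, x i
      = -(1/2) * ∑ i ∈ T, ∑ j ∈ Finset.univ \ T, c i j := by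
    intro T
    rw [hν, offDiag_sum_eq]
    have herase : ∀ i ∈ T, (Finset.univ.erase i : Finset N) = T.erase i ∪ (Finset.univ \ T) := by
      intro i hi
      ext j
      by_cases hj : j ∈ T <;> simp [Finset.mem_erase, hj] <;> aesop
    have hsplit : ∀ i ∈ T, x i = (1/2) * (∑ j ∈ T.erase i, c i j + ∑ j ∈ Finset.univ \ T, c i j) := by
      intro i hi
      rw [hx, herase i hi, Finset.sum_union]
      exact Finset.disjoint_left.mpr (by intro a ha; simp at ha ⊢; exact ha.2)
    rw [Finset.sum_congr rfl hsplit]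
    simp only [mul_add, Finset.sum_add_distrib, ← Finset.mul_sum]
    ring
  rw [key, key]
  have hcompl : Finset.univ \ (Finset.univ \ S) = S := by
    simp
  rw [hcompl, Finset.sum_comm]
  congr 1
  exact Finset.sum_congr rfl fun i _ => Finset.sum_congr rfl fun j _ => (hsym i j).symm
end

section
/- For the pairwise-similarity TU game ν and the allocation x_i = (1/2) · Σ_{j ∈ N, j ≠ i} c(i,j), every player has equal propensity to disrupt: for every i ∈ N, Σ_{j ∈ N, j ≠ i} x_j − ν(N \ {i}) = x_i − ν({i}). (Since ν({i}) = 0, each player's propensity to disrupt, defined as the ratio (Σ_{j≠i} x_j − ν(N\{i})) / (x_i − ν({i})), equals 1 whenever x_i ≠ 0.) -/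
lemma sum_offDiag_eq {N : Type*} [DecidableEq N] (S : Finset N) (f : N → N → ℝ) :
    ∑ p ∈ S.offDiag, f p.1 p.2 = ∑ j ∈ S, ∑ k ∈ S.erase j, f j k := by
  rw [show S.offDiag = (S ×ˢ S).filter (fun a : N × N => a.1 ≠ a.2) from by
    ext p; simp [Finset.mem_offDiag, and_assoc], Finset.sum_filter, Finset.sum_product]
  refine Finset.sum_congr rfl fun j hj => ?_
  rw [← Finset.sum_filter]
  congr 1
  ext k
  simp [Finset.mem_erase, eq_comm, and_comm]

/-- For the pairwise-similarity TU game
`ν(S) = Σ_{{i,j} ⊆ S, i ≠ j} c(i,j)` (with `c` symmetric) and the allocation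
`x_i = (1/2) · Σ_{j ≠ i} c(i,j)`, every player has equal propensity to disrupt:
for every `i`, `Σ_{j ≠ i} x_j − ν(N \ {i}) = x_i − ν({i})`. -/
theorem equal_propensity_to_disrupt {N : Type*} [Fintype N] [DecidableEq N]
    [Nonempty N]
    (c : N → N → ℝ) (hsym : ∀ i j, c i j = c j i)
    (ν : Finset N → ℝ)
    (hν : ∀ S : Finset N, ν S = (∑ p ∈ S.offDiag, c p.1 p.2) / 2)
    (x : N → ℝ)
    (hx : ∀ i, x i = (1 / 2) * ∑ j ∈ Finset.univ.erase i, c i j)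
    (i : N) :
    ∑ j ∈ Finset.univ.erase i, x j - ν (Finset.univ.erase i) = x i - ν {i} := by
  have key : ∀ j ∈ Finset.univ.erase i,
      x j = 1/2 * ((∑ k ∈ (Finset.univ.erase i).erase j, c j k) + c j i) := by
    intro j hj
    rw [hx]
    congr 1
    rw [Finset.erase_right_comm, Finset.sum_erase_add _ _
      (Finset.mem_erase.2 ⟨(Finset.ne_of_mem_erase hj).symm, Finset.mem_univ i⟩)]
  have hc : ∑ j ∈ Finset.univ.erase i, c j i = ∑ j ∈ Finset.univ.erase i, c i j :=
    Finset.sum_congr rfl fun j _ => hsym j i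
  rw [hν, hν, sum_offDiag_eq, Finset.offDiag_singleton, Finset.sum_empty, hx i,
    Finset.sum_congr rfl key]
  simp only [mul_add, Finset.sum_add_distrib, ← Finset.mul_sum, hc]
  ring
end

section
/- For the pairwise-similarity TU game ν, the τ-value coincides with the Shapley value: for every player i, (1/2) · (ν(N) − ν(N \ {i})) + (1/2) · ν({i}) = (1/2) · Σ_{j ∈ N, j ≠ i} c(i,j) = φ_i(ν). Equivalently, with M_i(ν) = ν(N) − ν(N\{i}) and m_i(ν) = ν({i}) = 0, the convex combination λ·M_i(ν) + (1−λ)·m_i(ν) with λ = 1/2 is efficient (sums to ν(N)) and equals the Shapley value. -/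
open Finset

private lemma marginal {N : Type*} [DecidableEq N] (c : N → N → ℝ)
    (hsym : ∀ i j, c i j = c j i) {i : N} {S : Finset N} (hiS : i ∉ S) :
    (∑ p ∈ (insert i S).offDiag, c p.1 p.2) / 2 - (∑ p ∈ S.offDiag, c p.1 p.2) / 2
      = ∑ j ∈ S, c i j := by
  have h1 : Disjoint (S.offDiag) ({i} ×ˢ S) := by
    simp only [Finset.disjoint_left, Finset.mem_offDiag, Finset.mem_product,
      Finset.mem_singleton, not_and, Prod.forall]
    intro a b ⟨ha, _, _⟩ hai
    exact absurd (hai ▸ ha) hiS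
  have h2 : Disjoint (S.offDiag ∪ {i} ×ˢ S) (S ×ˢ {i}) := by
    simp only [Finset.disjoint_left, Finset.mem_union, Finset.mem_offDiag,
      Finset.mem_product, Finset.mem_singleton, not_and, Prod.forall]
    rintro a b (⟨_, hb, _⟩ | ⟨_, hb⟩) haS
    · exact fun hbi => absurd (hbi ▸ hb) hiS
    · exact fun hbi => absurd (hbi ▸ hb) hiS
  rw [Finset.offDiag_insert (a := i) hiS, Finset.sum_union h2, Finset.sum_union h1,
    Finset.sum_product, Finset.sum_product, Finset.sum_singleton]
  simp only [Finset.sum_singleton]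
  have h3 : ∑ j ∈ S, c j i = ∑ j ∈ S, c i j :=
    Finset.sum_congr rfl fun j _ => hsym j i
  rw [h3]; ring

private lemma weight_sum {N : Type*} [Fintype N] [DecidableEq N]
    {i j : N} (hj : j ∈ Finset.univ.erase i) :
    ∑ S ∈ (Finset.univ.erase i).powerset.filter (fun S => j ∈ S),
        ((S.card.factorial : ℝ) * ((Fintype.card N - 1 - S.card).factorial : ℝ) /
          ((Fintype.card N).factorial : ℝ)) = 1 / 2 := by
  obtain ⟨hji, _⟩ := Finset.mem_erase.1 hj
  set A : Finset N := (Finset.univ.erase i).erase j with hA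
  have haj : j ∉ A := Finset.notMem_erase _ _
  have hAcard : A.card = Fintype.card N - 2 := by
    rw [hA, Finset.card_erase_of_mem hj, Finset.card_erase_of_mem (Finset.mem_univ i),
      Finset.card_univ]
    omega
  have hn : Fintype.card N = A.card + 2 := by
    have h2 : 2 ≤ Fintype.card N := Fintype.card_le_of_injective
      (fun b : Bool => if b then i else j) (by intro a b hab; cases a <;> cases b <;> simp_all)
    omega
  set a := A.card with ha
  -- bijection with powerset of A
  have hbij : ∑ S ∈ (Finset.univ.erase i).powerset.filter (fun S => j ∈ S),
        ((S.card.factorial : ℝ) * ((Fintype.card N - 1 - S.card).factorial : ℝ) /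
          ((Fintype.card N).factorial : ℝ))
      = ∑ T ∈ A.powerset,
        (((T.card + 1).factorial : ℝ) * ((a - T.card).factorial : ℝ) /
          ((Fintype.card N).factorial : ℝ)) := by
    refine Finset.sum_nbij' (fun S => S.erase j) (fun T => insert j T) ?_ ?_ ?_ ?_ ?_
    · intro S hS
      simp only [Finset.mem_filter, Finset.mem_powerset] at hS
      simp only [Finset.mem_powerset, hA]
      exact Finset.erase_subset_erase j hS.1
    · intro T hT
      simp only [Finset.mem_powerset] at hT
      simp only [Finset.mem_filter, Finset.mem_powerset]
      constructor
      · intro x hx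
        rcases Finset.mem_insert.1 hx with h | h
        · exact h ▸ hj
        · exact (Finset.erase_subset _ _) (hT h)
      · exact Finset.mem_insert_self j T
    · intro S hS
      simp only [Finset.mem_filter] at hS
      exact Finset.insert_erase hS.2
    · intro T hT
      simp only [Finset.mem_powerset] at hT
      exact Finset.erase_insert (fun h => haj (hT h))
    · intro S hS
      simp only [Finset.mem_filter] at hS
      have hjS : j ∈ S := hS.2
      have hpos : 0 < S.card := Finset.card_pos.2 ⟨j, hjS⟩
      have hcard : (S.erase j).card = S.card - 1 := Finset.card_erase_of_mem hjS
      have e1 : (S.erase j).card + 1 = S.card := by omega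
      have e2 : a - (S.erase j).card = Fintype.card N - 1 - S.card := by
        rw [hcard, hAcard]
        omega
      simp only [e1, e2]
  rw [hbij, Finset.sum_powerset_apply_card
    (fun m => (((m + 1).factorial : ℝ) * ((a - m).factorial : ℝ) / ((Fintype.card N).factorial : ℝ)))]
  have hterm : ∀ m ∈ Finset.range (a + 1),
      a.choose m • (((m + 1).factorial : ℝ) * ((a - m).factorial : ℝ) /
        ((Fintype.card N).factorial : ℝ))
      = ((m : ℝ) + 1) * (a.factorial : ℝ) / ((Fintype.card N).factorial : ℝ) := by
    intro m hm
    rw [Finset.mem_range] at hm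
    have hma : m ≤ a := by omega
    have base := Nat.choose_mul_factorial_mul_factorial hma
    have key : a.choose m * (m + 1).factorial * (a - m).factorial = (m + 1) * a.factorial := by
      calc a.choose m * (m + 1).factorial * (a - m).factorial
          = (m + 1) * (a.choose m * m.factorial * (a - m).factorial) := by
            rw [Nat.factorial_succ]; ring
        _ = (m + 1) * a.factorial := by rw [base]
    have keyR : (a.choose m : ℝ) * (((m + 1).factorial : ℝ) * ((a - m).factorial : ℝ))
        = ((m : ℝ) + 1) * (a.factorial : ℝ) := by
      have := congrArg (Nat.cast (R := ℝ)) key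
      push_cast at this
      linarith [this]
    rw [nsmul_eq_mul, mul_div_assoc', keyR]
  rw [Finset.sum_congr rfl hterm]
  have hsum : ∑ m ∈ Finset.range (a + 1), ((m : ℝ) + 1) = ((a : ℝ) + 1) * ((a : ℝ) + 2) / 2 := by
    induction a with
    | zero => simp
    | succ k ih => rw [Finset.sum_range_succ, ih]; push_cast; ring
  have hfact : ((Fintype.card N).factorial : ℝ) = ((a : ℝ) + 2) * ((a : ℝ) + 1) * (a.factorial : ℝ) := by
    rw [hn]
    push_cast [Nat.factorial_succ]
    ring
  have hfa : (a.factorial : ℝ) ≠ 0 := by positivity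
  rw [← Finset.sum_div, ← Finset.sum_mul, hsum, hfact]
  have h1 : (0:ℝ) < (a : ℝ) + 1 := by have := (Nat.cast_nonneg a : (0:ℝ) ≤ a); linarith
  have h2 : (0:ℝ) < (a : ℝ) + 2 := by have := (Nat.cast_nonneg a : (0:ℝ) ≤ a); linarith
  field_simp



/-- For the pairwise-similarity TU game
`ν(S) = Σ_{{i,j} ⊆ S, i ≠ j} c(i,j)` (with `c` symmetric), the τ-value (with
`λ = 1/2`, `M_i(ν) = ν(N) − ν(N\{i})` and `m_i(ν) = ν({i})`) coincides with the
Shapley value: for every player `i`,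
`(1/2)·(ν(N) − ν(N\{i})) + (1/2)·ν({i}) = (1/2)·Σ_{j ≠ i} c(i,j) = φ_i(ν)`. -/
theorem tau_value_eq_shapley {N : Type*} [Fintype N] [DecidableEq N] [Nonempty N]
    (c : N → N → ℝ) (hsym : ∀ i j, c i j = c j i)
    (ν : Finset N → ℝ)
    (hν : ∀ S : Finset N, ν S = (∑ p ∈ S.offDiag, c p.1 p.2) / 2)
    (i : N) :
    (1 / 2) * (ν Finset.univ - ν (Finset.univ.erase i)) + (1 / 2) * ν {i}
        = (1 / 2) * ∑ j ∈ Finset.univ.erase i, c i j ∧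
    (1 / 2) * ∑ j ∈ Finset.univ.erase i, c i j
        = ∑ S ∈ (Finset.univ.erase i).powerset,
            ((S.card.factorial : ℝ) * ((Fintype.card N - 1 - S.card).factorial : ℝ) /
              ((Fintype.card N).factorial : ℝ)) * (ν (insert i S) - ν S) := by
  constructor
  · have h1 : ν Finset.univ - ν (Finset.univ.erase i) = ∑ j ∈ Finset.univ.erase i, c i j := by
      have := marginal c hsym (Finset.notMem_erase i Finset.univ)
      rw [Finset.insert_erase (Finset.mem_univ i)] at this
      rw [hν, hν]; exact this
    have h2 : ν {i} = 0 := by rw [hν]; simp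
    rw [h1, h2]; ring
  · have hmarg : ∀ S ∈ (Finset.univ.erase i).powerset,
        ν (insert i S) - ν S = ∑ j ∈ S, c i j := by
      intro S hS
      rw [Finset.mem_powerset] at hS
      have hiS : i ∉ S := fun h => Finset.notMem_erase i Finset.univ (hS h)
      rw [hν, hν]
      exact marginal c hsym hiS
    calc (1 / 2) * ∑ j ∈ Finset.univ.erase i, c i j
        = ∑ j ∈ Finset.univ.erase i,
            (∑ S ∈ (Finset.univ.erase i).powerset.filter (fun S => j ∈ S),
              ((S.card.factorial : ℝ) * ((Fintype.card N - 1 - S.card).factorial : ℝ) /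
                ((Fintype.card N).factorial : ℝ))) * c i j := by
          rw [Finset.mul_sum]
          refine Finset.sum_congr rfl fun j hj => ?_
          rw [weight_sum hj]
      _ = ∑ j ∈ Finset.univ.erase i, ∑ S ∈ (Finset.univ.erase i).powerset,
            (if j ∈ S then
              ((S.card.factorial : ℝ) * ((Fintype.card N - 1 - S.card).factorial : ℝ) /
                ((Fintype.card N).factorial : ℝ)) * c i j else 0) := by
          refine Finset.sum_congr rfl fun j _ => ?_
          rw [Finset.sum_mul, Finset.sum_filter]
      _ = ∑ S ∈ (Finset.univ.erase i).powerset, ∑ j ∈ Finset.univ.erase i,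
            (if j ∈ S then
              ((S.card.factorial : ℝ) * ((Fintype.card N - 1 - S.card).factorial : ℝ) /
                ((Fintype.card N).factorial : ℝ)) * c i j else 0) := Finset.sum_comm
      _ = ∑ S ∈ (Finset.univ.erase i).powerset,
            ((S.card.factorial : ℝ) * ((Fintype.card N - 1 - S.card).factorial : ℝ) /
              ((Fintype.card N).factorial : ℝ)) * (ν (insert i S) - ν S) := by
          refine Finset.sum_congr rfl fun S hS => ?_
          rw [hmarg S hS, Finset.mul_sum, ← Finset.sum_filter,
            Finset.filter_mem_eq_inter,
            Finset.inter_eq_right.2 (Finset.mem_powerset.1 hS)]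
end

section
/- For every r ≥ 1, the maximum possible Footrule distance between two preferences on r alternatives equals 2·⌈r/2⌉·⌊r/2⌋; that is, max over permutations p, q of {1,…,r} of Σ_{a=1}^{r} |p(a) − q(a)| = 2·⌈r/2⌉·⌊r/2⌋. -/
lemma sum_dist_center : ∀ r : ℕ,
    ∑ v ∈ Finset.range r, Nat.dist v (r / 2) = ((r + 1) / 2) * (r / 2)
  | 0 => by simp
  | 1 => by simp
  | (n + 2) => by
    have ih := sum_dist_center n
    have hc : (n + 2) / 2 = n / 2 + 1 := by omega
    have hstep : ∑ v ∈ Finset.range (n + 2), Nat.dist v ((n + 2) / 2)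
        = (∑ v ∈ Finset.range n, Nat.dist v (n / 2)) + (n + 1) := by
      rw [hc, Finset.sum_range_succ' (fun v => Nat.dist v (n / 2 + 1))]
      have h1 : ∀ v, Nat.dist (v + 1) (n / 2 + 1) = Nat.dist v (n / 2) := by
        intro v; simp [Nat.dist]
      simp only [h1]
      rw [Finset.sum_range_succ]
      have h2 : Nat.dist n (n / 2) = n - n / 2 := by simp only [Nat.dist]; omega
      have h3 : Nat.dist 0 (n / 2 + 1) = n / 2 + 1 := by simp only [Nat.dist]; omega
      omega
    rw [hstep, ih]
    rcases Nat.even_or_odd n with ⟨m, rfl⟩ | ⟨m, rfl⟩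
    · have e1 : (m + m + 1) / 2 = m := by omega
      have e2 : (m + m) / 2 = m := by omega
      have e3 : (m + m + 2 + 1) / 2 = m + 1 := by omega
      have e4 : (m + m + 2) / 2 = m + 1 := by omega
      rw [e1, e2, e3, e4]; ring
    · have e1 : (2 * m + 1 + 1) / 2 = m + 1 := by omega
      have e2 : (2 * m + 1) / 2 = m := by omega
      have e3 : (2 * m + 1 + 2 + 1) / 2 = m + 2 := by omega
      have e4 : (2 * m + 1 + 2) / 2 = m + 1 := by omega
      rw [e1, e2, e3, e4]; ring

lemma sum_dist_center' (r : ℕ) :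
    ∑ v : Fin r, Nat.dist (v : ℕ) (r / 2) = ((r + 1) / 2) * (r / 2) := by
  rw [Fin.sum_univ_eq_sum_range (fun v => Nat.dist v (r / 2))]
  exact sum_dist_center r

/-- For every `r ≥ 1`, the maximum possible Footrule distance
between two preferences (permutations of `{1,…,r}`) equals
`2·⌈r/2⌉·⌊r/2⌋`; i.e. the greatest element of the set of values
`Σ_a |p(a) − q(a)|` over permutations `p, q` is `2·⌈r/2⌉·⌊r/2⌋`
(in ℕ, `⌈r/2⌉ = (r+1)/2` and `⌊r/2⌋ = r/2`). -/
theorem max_footrule_distance (r : ℕ) (hr : 1 ≤ r) :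
    IsGreatest
      {d : ℕ | ∃ p q : Equiv.Perm (Fin r), d = ∑ a : Fin r, Nat.dist (p a) (q a)}
      (2 * ((r + 1) / 2) * (r / 2)) := by
  constructor
  · -- membership: take p the reversal, q the identity
    refine ⟨Fin.revPerm, 1, ?_⟩
    have key : ∀ a : Fin r, Nat.dist ((a.rev : Fin r) : ℕ) (a : ℕ)
        = Nat.dist ((a.rev : Fin r) : ℕ) (r / 2) + Nat.dist (r / 2) (a : ℕ) := by
      intro a
      have h1 : (a : ℕ) < r := a.isLt
      have h2 : ((a.rev : Fin r) : ℕ) = r - (a + 1) := Fin.val_rev a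
      simp only [Nat.dist]
      omega
    have : ∑ a : Fin r, Nat.dist ((Fin.revPerm a : Fin r) : ℕ) (((1 : Equiv.Perm (Fin r)) a : Fin r) : ℕ)
        = ∑ a : Fin r, (Nat.dist ((a.rev : Fin r) : ℕ) (r / 2) + Nat.dist (r / 2) (a : ℕ)) := by
      apply Finset.sum_congr rfl
      intro a _
      simpa using key a
    rw [this, Finset.sum_add_distrib]
    have hA : ∑ a : Fin r, Nat.dist ((a.rev : Fin r) : ℕ) (r / 2)
        = ((r + 1) / 2) * (r / 2) := by
      exact (Equiv.sum_comp Fin.revPerm (fun a : Fin r => Nat.dist (a : ℕ) (r / 2))).trans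
        (sum_dist_center' r)
    have hB : ∑ a : Fin r, Nat.dist (r / 2) (a : ℕ) = ((r + 1) / 2) * (r / 2) := by
      simp only [Nat.dist_comm (r / 2)]
      exact sum_dist_center' r
    rw [hA, hB]; ring
  · rintro d ⟨p, q, rfl⟩
    calc ∑ a : Fin r, Nat.dist ((p a : Fin r) : ℕ) ((q a : Fin r) : ℕ)
        ≤ ∑ a : Fin r, (Nat.dist ((p a : Fin r) : ℕ) (r / 2)
            + Nat.dist (r / 2) ((q a : Fin r) : ℕ)) := by
          exact Finset.sum_le_sum fun a _ => Nat.dist.triangle_inequality _ _ _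
      _ = 2 * ((r + 1) / 2) * (r / 2) := by
          rw [Finset.sum_add_distrib]
          have hA : ∑ a : Fin r, Nat.dist ((p a : Fin r) : ℕ) (r / 2)
              = ((r + 1) / 2) * (r / 2) := by
            exact (Equiv.sum_comp p (fun a : Fin r => Nat.dist (a : ℕ) (r / 2))).trans
              (sum_dist_center' r)
          have hB : ∑ a : Fin r, Nat.dist (r / 2) ((q a : Fin r) : ℕ)
              = ((r + 1) / 2) * (r / 2) := by
            simp only [Nat.dist_comm (r / 2)]
            exact (Equiv.sum_comp q (fun a : Fin r => Nat.dist (a : ℕ) (r / 2))).trans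
              (sum_dist_center' r)
          rw [hA, hB]; ring
end
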